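/- Let k be a field, G a finite non-abelian group, and V a Yetter–Drinfeld module over kG whose support is a conjugacy class of G that generates G. Let N be the kernel of the representation of G on V (the set of g ∈ G acting as the identity on V). Then the quotient group G/N is non-abelian. -/

import Mathlib

/-- Let `k` be a field, `G` a finite non-abelian group, and `V` a
Yetter–Drinfeld module over `kG` (a `G`-representation with a `G`-grading
`V = ⊕_{g ∈ G} V_g` satisfying `g · V_h = V_{ghg⁻¹}`) whose support is a conjugacy class
generating `G`. If `N` is the kernel of the representation of `G` on `V`, then `G/N` is
non-abelian. -/
theorem quotient_by_kernel_nonabelian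
    {k : Type*} [Field k] {G : Type*} [Group G] [Finite G] [DecidableEq G]
    (hG : ∃ a b : G, a * b ≠ b * a)
    {V : Type*} [AddCommGroup V] [Module k V]
    (ρ : Representation k G V) (grading : G → Submodule k V)
    (hinternal : DirectSum.IsInternal grading)
    (hcompat : ∀ g h : G, (grading h).map (ρ g) = grading (g * h * g⁻¹))
    (g₀ : G)
    (hsupp : {g : G | grading g ≠ ⊥} = {x : G | ∃ h : G, h * g₀ * h⁻¹ = x})
    (hgen : Subgroup.closure {g : G | grading g ≠ ⊥} = ⊤)
    (N : Subgroup G) [N.Normal]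
    (hker : ∀ g : G, g ∈ N ↔ ∀ v : V, ρ g v = v) :
    ∃ a b : G ⧸ N, a * b ≠ b * a := by
  by_contra hcon
  push_neg at hcon
  -- N acts trivially, hence preserves each grading piece, hence centralizes the support
  have hcomm : ∀ n ∈ N, ∀ x ∈ {g : G | grading g ≠ ⊥}, n * x = x * n := by
    intro n hn x hx
    have hρ : ∀ v, ρ n v = v := (hker n).1 hn
    have hmap : (grading x).map (ρ n) = grading x := by
      ext v
      simp only [Submodule.mem_map]
      constructor
      · rintro ⟨w, hw, rfl⟩; rwa [hρ]
      · intro hv; exact ⟨v, hv, hρ v⟩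
    have heq : grading x = grading (n * x * n⁻¹) := by
      rw [← hcompat n x, hmap]
    have hx2 : x = n * x * n⁻¹ := by
      by_contra hne
      have hdis : Disjoint (grading x) (grading (n * x * n⁻¹)) :=
        hinternal.submodule_iSupIndep.pairwiseDisjoint hne
      rw [← heq, disjoint_self] at hdis
      exact hx hdis
    calc n * x = (n * x * n⁻¹) * n := by group
    _ = x * n := by rw [← hx2]
  have hNle : N ≤ Subgroup.center G := by
    intro n hn
    rw [Subgroup.mem_center_iff]
    have hle : (⊤ : Subgroup G) ≤ Subgroup.centralizer {n} := by
      rw [← hgen]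
      apply (Subgroup.closure_le _).mpr
      intro x hx
      rw [SetLike.mem_coe, Subgroup.mem_centralizer_iff]
      intro b hb
      rw [Set.mem_singleton_iff] at hb
      rw [hb]
      exact hcomm n hn x hx
    intro g
    have := hle (Subgroup.mem_top g)
    rw [Subgroup.mem_centralizer_iff] at this
    exact (this n rfl).symm
  -- g₀ is in the support
  have hg₀ : ((g₀ : G ⧸ N)) = QuotientGroup.mk' N g₀ := rfl
  -- the quotient is cyclic, generated by the image of g₀
  have htop : (⊤ : Subgroup (G ⧸ N)) ≤ Subgroup.zpowers ((g₀ : G ⧸ N)) := by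
    have h1 : Subgroup.map (QuotientGroup.mk' N) ⊤ = ⊤ :=
      Subgroup.map_top_of_surjective _ (QuotientGroup.mk'_surjective N)
    rw [← h1, ← hgen, MonoidHom.map_closure]
    apply (Subgroup.closure_le _).mpr
    rintro q ⟨x, hx, rfl⟩
    rw [hsupp] at hx
    obtain ⟨h, rfl⟩ := hx
    have : (QuotientGroup.mk' N) (h * g₀ * h⁻¹) = (g₀ : G ⧸ N) := by
      rw [map_mul, map_mul]
      rw [hcon ((QuotientGroup.mk' N) h) ((QuotientGroup.mk' N) g₀)]
      rw [mul_assoc, map_inv, mul_inv_cancel, mul_one]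
      rfl
    rw [SetLike.mem_coe, this]
    exact Subgroup.mem_zpowers _
  haveI : IsCyclic (G ⧸ N) := ⟨⟨(g₀ : G ⧸ N), fun x => htop (Subgroup.mem_top x)⟩⟩
  have hab : ∀ a b : G, a * b = b * a := by
    apply commutative_of_cyclic_center_quotient (QuotientGroup.mk' N)
    rw [QuotientGroup.ker_mk']
    exact hNle
  obtain ⟨a, b, hne⟩ := hG
  exact hne (hab a b)
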